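/- Let G be a graph with no bipartite component and each component of order at least 3, and let t be an odd integer with t ≥ χ(G) ≥ 3. Then every proper t-vertex coloring of G using colors in {0, 1, ..., t−1} is induced by some improper twin t-edge coloring of G. -/
import Mathlib


open Finset

-- The vertex label induced by an edge coloring: `twinLabel G s v = Σ_{e ∈ E_v} s e` in `ZMod k`.
open scoped Classical in
noncomputable def twinLabel {V : Type*} [Fintype V] (G : SimpleGraph V) {k : ℕ}
    (s : Sym2 V → ZMod k) (v : V) : ZMod k :=
  ∑ e ∈ G.incidenceFinset v, s e

/-- `s` is an improper twin `k`-edge coloring of `G`: the induced vertex labeling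
is a proper vertex coloring. -/
def IsImproperTwin {V : Type*} [Fintype V] (G : SimpleGraph V) (k : ℕ)
    (s : Sym2 V → ZMod k) : Prop :=
  ∀ ⦃u v : V⦄, G.Adj u v → twinLabel G s u ≠ twinLabel G s v

/-- The improper twin chromatic index: the least `k ≥ 2` admitting an improper twin
`k`-edge coloring. -/
noncomputable def improperTwinIndex {V : Type*} [Fintype V] (G : SimpleGraph V) : ℕ :=
  sInf {k | 2 ≤ k ∧ ∃ s : Sym2 V → ZMod k, IsImproperTwin G k s}


section aux
variable {V : Type*} [Fintype V] {G : SimpleGraph V} {t : ℕ}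

open scoped Classical in
noncomputable def wtAux (t : ℕ) : ∀ {a b : V}, ZMod t → G.Walk a b → (Sym2 V → ZMod t)
  | _, _, _, .nil => 0
  | a, _, x, .cons (v := c) h q => (fun e => if e = s(a, c) then x else 0) + wtAux t (-x) q

open scoped Classical in
lemma twinLabel_add (s1 s2 : Sym2 V → ZMod t) (w : V) :
    twinLabel G (s1 + s2) w = twinLabel G s1 w + twinLabel G s2 w := by
  simp [twinLabel, Finset.sum_add_distrib]

open scoped Classical in
lemma twinLabel_single {a c : V} (h : G.Adj a c) (x : ZMod t) (w : V) :
    twinLabel G (fun e => if e = s(a, c) then x else 0) w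
      = (if w = a then x else 0) + (if w = c then x else 0) := by
  classical
  rw [twinLabel, Finset.sum_ite_eq' _ s(a,c) (fun _ => x)]
  by_cases hw : s(a,c) ∈ G.incidenceFinset w
  · rw [if_pos hw]
    rw [SimpleGraph.mem_incidenceFinset] at hw
    have hmem : w = a ∨ w = c := by
      have := hw.2
      simpa using this
    rcases hmem with rfl | rfl
    · rw [if_pos rfl, if_neg h.ne, add_zero]
    · rw [if_neg (fun hh => h.ne' hh), if_pos rfl, zero_add]
  · rw [if_neg hw]
    rw [SimpleGraph.mem_incidenceFinset] at hw
    have : ¬ (w = a ∨ w = c) := by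
      intro hh
      exact hw ⟨(SimpleGraph.mem_edgeSet G).mpr h, by rcases hh with rfl|rfl <;> simp⟩
    push_neg at this
    rw [if_neg this.1, if_neg this.2, add_zero]
end aux

section aux2
variable {V : Type*} [Fintype V] {G : SimpleGraph V} {t : ℕ}

open scoped Classical in
lemma twinLabel_zero (w : V) : twinLabel G (0 : Sym2 V → ZMod t) w = 0 := by
  simp [twinLabel]

open scoped Classical in
lemma twinLabel_wtAux {a b : V} (p : G.Walk a b) (x : ZMod t) (w : V) :
    twinLabel G (wtAux t x p) w =
      x * ((if w = a then 1 else 0) - (if w = b then 1 else 0) * (-1) ^ p.length) := by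
  induction p generalizing x with
  | nil =>
    simp [wtAux, twinLabel_zero]
  | @cons a c b h q ih =>
    rw [wtAux, twinLabel_add, twinLabel_single h, ih]
    simp only [SimpleGraph.Walk.length_cons, pow_succ]
    ring_nf
    by_cases hwa : w = a <;> by_cases hwc : w = c <;>
      simp [hwa, hwc] <;> ring
end aux2

lemma exists_odd_closed_walk {V : Type*} [Fintype V] (G : SimpleGraph V) (v : V)
    (hnb : ¬ (G.induce (G.connectedComponentMk v).supp).Colorable 2) :
    ∃ p : G.Walk v v, Odd p.length := by
  by_contra h
  push_neg at h
  apply hnb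
  have hreach : ∀ u : (G.connectedComponentMk v).supp, G.Reachable v u := by
    intro u
    have hu := u.2
    rw [SimpleGraph.ConnectedComponent.mem_supp_iff] at hu
    exact (SimpleGraph.ConnectedComponent.exact hu).symm
  refine ⟨SimpleGraph.Coloring.mk
    (fun u => (⟨(hreach u).some.length % 2, Nat.mod_lt _ (by norm_num)⟩ : Fin 2)) ?_⟩
  intro u w hadj heq
  have hadj' : G.Adj u w := hadj
  set p := (hreach u).some
  set q := (hreach w).some
  have hr := h ((p.concat hadj').append q.reverse)
  rw [Nat.not_odd_iff_even, Nat.even_iff] at hr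
  simp only [SimpleGraph.Walk.length_append, SimpleGraph.Walk.length_concat,
    SimpleGraph.Walk.length_reverse] at hr
  have heq' : p.length % 2 = q.length % 2 := congrArg Fin.val heq
  omega

open scoped Classical in
theorem stmt_5' {V : Type*} [Fintype V] (G : SimpleGraph V)
    (hnb : ∀ v : V, ¬ (G.induce (G.connectedComponentMk v).supp).Colorable 2)
    (t : ℕ) (htodd : Odd t)
    (f : V → ZMod t) :
    ∃ s : Sym2 V → ZMod t, ∀ u : V, twinLabel G s u = f u := by
  choose p hp using fun v => exists_odd_closed_walk G v (hnb v)
  set m : ZMod t := (((t + 1) / 2 : ℕ) : ZMod t) with hm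
  refine ⟨fun e => ∑ v : V, wtAux t (m * f v) (p v) e, ?_⟩
  intro u
  have hswap : twinLabel G (fun e => ∑ v : V, wtAux t (m * f v) (p v) e) u
      = ∑ v : V, twinLabel G (wtAux t (m * f v) (p v)) u := by
    rw [twinLabel]
    rw [Finset.sum_comm]
    rfl
  rw [hswap]
  have h2m : (2 : ZMod t) * m = 1 := by
    have hn : (2 * ((t + 1) / 2) : ℕ) = t + 1 := by
      obtain ⟨k, rfl⟩ := htodd; omega
    have : ((2 * ((t + 1) / 2) : ℕ) : ZMod t) = ((t + 1 : ℕ) : ZMod t) := by rw [hn]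
    push_cast at this
    rw [ZMod.natCast_self] at this
    simpa [hm] using this
  have hterm : ∀ v : V, twinLabel G (wtAux t (m * f v) (p v)) u
      = if u = v then f v else 0 := by
    intro v
    rw [twinLabel_wtAux]
    have hodd : (-1 : ZMod t) ^ (p v).length = -1 := (hp v).neg_one_pow
    rw [hodd]
    by_cases huv : u = v
    · rw [if_pos huv]
      rw [if_pos huv]
      have : (m * f v) * (1 - 1 * (-1)) = (2 * m) * f v := by ring
      rw [this, h2m, one_mul]
    · rw [if_neg huv, if_neg huv]; ring
  rw [Finset.sum_congr rfl (fun v _ => hterm v), Finset.sum_ite_eq _ u f, if_pos (Finset.mem_univ u)]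

theorem stmt_5 {V : Type*} [Fintype V] (G : SimpleGraph V)
    (hnb : ∀ v : V, ¬ (G.induce (G.connectedComponentMk v).supp).Colorable 2)
    (hnice : ∀ v : V, 3 ≤ (G.connectedComponentMk v).supp.ncard)
    (t : ℕ) (htodd : Odd t)
    (hχ3 : 3 ≤ G.chromaticNumber) (htχ : G.chromaticNumber ≤ (t : ℕ∞))
    (f : V → ZMod t) (hf : ∀ ⦃u w : V⦄, G.Adj u w → f u ≠ f w) :
    ∃ s : Sym2 V → ZMod t, ∀ u : V, twinLabel G s u = f u := by
  exact stmt_5' G hnb t htodd f
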